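/- arXiv:2102.09830 — 3 statements merged into one kernel-verified Lean document; each statement's English description precedes it below -/
import Mathlib

section
/- Let X be a locally connected topological space and F a sheaf of abelian groups on X. Let I be the poset of nonempty connected open subsets of X, ordered by reverse inclusion (i ≤ j iff U_i ⊇ U_j). Then the cosections group L(X,F) is naturally isomorphic to the colimit colim_{i∈I} F(U_i). -/
open CategoryTheory CategoryTheory.Limits TopologicalSpace

/-- The functor `F ↦ colim_{i ∈ I} F(U_i)`, where `I` is the poset of nonempty connected open
subsets of `X` ordered by reverse inclusion (so that the transition maps are the restriction
maps `F(U_i) → F(U_j)` for `U_j ⊆ U_i`). -/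
noncomputable def connColimitFunctor (X : TopCat.{u}) :
    TopCat.Sheaf AddCommGrpCat.{u} X ⥤ AddCommGrpCat.{u} :=
  TopCat.Sheaf.forget AddCommGrpCat.{u} X ⋙
    (Functor.whiskeringLeft _ _ AddCommGrpCat.{u}).obj
      (ObjectProperty.ι
        (fun U : Opens X => (U : Set X).Nonempty ∧ IsConnected (U : Set X) :
          ObjectProperty (Opens X))).op ⋙
    colim

universe u

noncomputable section
namespace ConnColimAux
variable (X : TopCat.{u})

abbrev KK : GrothendieckTopology (Opens X) := Opens.grothendieckTopology X

abbrev ConnOp := ObjectProperty.FullSubcategory (fun U : Opens X => (U : Set X).Nonempty ∧ IsConnected (U : Set X) :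
  ObjectProperty (Opens X))

abbrev incl : ConnOp X ⥤ Opens X :=
  ObjectProperty.ι (fun U : Opens X => (U : Set X).Nonempty ∧ IsConnected (U : Set X) :
  ObjectProperty (Opens X))

instance coverDense [LocallyConnectedSpace X] : (incl X).IsCoverDense (KK X) := by
  constructor
  intro V x hx
  obtain ⟨W, hWV, hWo, hxW, hWc⟩ :=
    locallyConnectedSpace_iff_subsets_isOpen_isConnected.mp ‹_› x (V : Set X)
      (V.isOpen.mem_nhds hx)
  refine ⟨⟨W, hWo⟩, homOfLE hWV, ?_, hxW⟩
  exact ⟨⟨⟨⟨W, hWo⟩, ⟨hWc.nonempty, hWc⟩⟩, 𝟙 _, homOfLE hWV, rfl⟩⟩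

def lcPresheaf (A : AddCommGrpCat.{u}) : (Opens X)ᵒᵖ ⥤ AddCommGrpCat.{u} where
  obj U := AddCommGrpCat.of (LocallyConstant (U.unop : Opens X) A)
  map {U V} f := AddCommGrpCat.ofHom (LocallyConstant.comapAddMonoidHom
    ⟨Set.inclusion (leOfHom f.unop), continuous_inclusion (leOfHom f.unop)⟩)
  map_id U := by ext φ : 1; rfl
  map_comp f g := by ext φ : 1; rfl

variable {X}
theorem lc_isSheaf (A : AddCommGrpCat.{u}) : TopCat.Presheaf.IsSheaf (lcPresheaf X A) := by
  rw [TopCat.Presheaf.isSheaf_iff_isSheafUniqueGluing]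
  intro ι U sf₀ hsf
  let F := lcPresheaf X A
  let sf : ∀ i, LocallyConstant ↥(U i) A := sf₀
  -- pointwise well-definedness
  have key : ∀ (z : X) (i j : ι) (hi : z ∈ U i) (hj : z ∈ U j),
      sf i ⟨z, hi⟩ = sf j ⟨z, hj⟩ := by
    intro z i j hi hj
    have h := hsf i j
    have h' : (show LocallyConstant ↥(U i ⊓ U j) A from
        F.map (Opens.infLELeft (U i) (U j)).op (sf₀ i)) =
        (show LocallyConstant ↥(U i ⊓ U j) A from
        F.map (Opens.infLERight (U i) (U j)).op (sf₀ j)) := h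
    exact DFunLike.congr_fun h' (⟨z, hi, hj⟩ : ↥(U i ⊓ U j))
  have mem : ∀ z : ↥(iSup U), ∃ i, z.1 ∈ U i := fun z => Opens.mem_iSup.mp z.2
  classical
  let g : ↥(iSup U) → A := fun z => sf (mem z).choose ⟨z.1, (mem z).choose_spec⟩
  have gdef : ∀ (z : ↥(iSup U)) (i : ι) (hi : z.1 ∈ U i), g z = sf i ⟨z.1, hi⟩ :=
    fun z i hi => key z.1 _ i _ hi
  have hg : IsLocallyConstant g := by
    rw [IsLocallyConstant.iff_exists_open]
    intro z
    obtain ⟨i, hi⟩ := mem z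
    obtain ⟨O, hOo, hzO, hO⟩ := (sf i).isLocallyConstant.exists_open ⟨z.1, hi⟩
    obtain ⟨W0, hW0o, hW0⟩ := isOpen_induced_iff.mp hOo
    refine ⟨Subtype.val ⁻¹' (W0 ∩ (U i : Set X)), ?_, ?_, ?_⟩
    · exact (hW0o.inter (U i).isOpen).preimage continuous_subtype_val
    · refine ⟨?_, hi⟩
      have : (⟨z.1, hi⟩ : ↥(U i)) ∈ O := hzO
      rw [← hW0] at this
      exact this
    · intro y hy
      have hyi : y.1 ∈ U i := hy.2
      have hyO : (⟨y.1, hyi⟩ : ↥(U i)) ∈ O := by rw [← hW0]; exact hy.1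
      rw [gdef y i hyi, gdef z i hi]
      exact hO _ hyO
  refine ⟨(⟨g, hg⟩ : LocallyConstant ↥(iSup U) A), fun i => ?_, fun t₀ ht => ?_⟩
  · show (show LocallyConstant ↥(U i) A from
      F.map (Opens.leSupr U i).op (⟨g, hg⟩ : LocallyConstant ↥(iSup U) A)) = sf i
    ext z
    exact gdef ⟨z.1, le_iSup U i z.2⟩ i z.2
  · let t : LocallyConstant ↥(iSup U) A := t₀
    show t = (⟨g, hg⟩ : LocallyConstant ↥(iSup U) A)
    ext z
    obtain ⟨i, hi⟩ := mem z
    have h' : (show LocallyConstant ↥(U i) A from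
        F.map (Opens.leSupr U i).op t₀) = sf i := ht i
    have h2 : t z = sf i ⟨z.1, hi⟩ := by
      have := DFunLike.congr_fun h' (⟨z.1, hi⟩ : ↥(U i))
      exact this.symm ▸ rfl
    show t z = g z
    rw [h2]
    exact (gdef z i hi).symm

variable (X)

def lcFunctor : AddCommGrpCat.{u} ⥤ Sheaf (KK X) AddCommGrpCat.{u} where
  obj A := ⟨lcPresheaf X A, lc_isSheaf A⟩
  map {A B} g := ⟨{
    app := fun U => AddCommGrpCat.ofHom (LocallyConstant.mapAddMonoidHom g.hom)
    naturality := fun U V f => by ext φ : 1; rfl }⟩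
  map_id A := by ext : 2; ext φ : 1; ext z; rfl
  map_comp f g := by ext : 2; ext φ : 1; ext z; rfl

/-- The canonical map from the constant presheaf to locally constant functions. -/
def etaNat : Functor.const (Opens X)ᵒᵖ ⟶ lcFunctor X ⋙ sheafToPresheaf (KK X) AddCommGrpCat.{u} where
  app A := {
    app := fun U => AddCommGrpCat.ofHom
      { toFun := fun a => LocallyConstant.const _ a
        map_zero' := rfl
        map_add' := fun a b => rfl }
    naturality := fun U V f => by ext a : 1; rfl }
  naturality := fun A B g => by ext U a : 3; rfl

instance etaSurj (A : AddCommGrpCat.{u}) :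
    Presheaf.IsLocallySurjective (KK X) ((etaNat X).app A) := by
  constructor
  intro V s₀ z hz
  let s : LocallyConstant (V : Opens X) A := s₀
  obtain ⟨O, hOo, hzO, hO⟩ := s.isLocallyConstant.exists_open ⟨z, hz⟩
  obtain ⟨W0, hW0o, hW0⟩ := isOpen_induced_iff.mp hOo
  refine ⟨⟨W0, hW0o⟩ ⊓ V, homOfLE inf_le_right, ⟨s ⟨z, hz⟩, ?_⟩, ?_⟩
  · show (show LocallyConstant ((⟨W0, hW0o⟩ ⊓ V : Opens X) : Opens X) A from
      LocallyConstant.const _ (s ⟨z, hz⟩)) =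
      (lcPresheaf X A).map (homOfLE (inf_le_right : ⟨W0, hW0o⟩ ⊓ V ≤ V)).op s₀
    ext w
    have hwO : (⟨w.1, w.2.2⟩ : (V : Opens X)) ∈ O := by rw [← hW0]; exact w.2.1
    exact (hO _ hwO).symm
  · have : (⟨z, hz⟩ : (V : Opens X)) ∈ O := hzO
    rw [← hW0] at this
    exact ⟨this, hz⟩

instance etaInj (A : AddCommGrpCat.{u}) :
    Presheaf.IsLocallyInjective (KK X) ((etaNat X).app A) := by
  constructor
  intro V a b h z hz
  refine ⟨V.unop, 𝟙 _, ?_, hz⟩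
  have : (show LocallyConstant ((V.unop : Opens X) : Opens X) A from
      LocallyConstant.const _ a) = LocallyConstant.const _ b := h
  have hab : a = b := DFunLike.congr_fun this ⟨z, hz⟩
  exact hab

instance etaIsoInst (A : AddCommGrpCat.{u}) : IsIso ((presheafToSheaf (KK X) AddCommGrpCat).map ((etaNat X).app A)) := by
  rw [← GrothendieckTopology.W_iff]
  exact GrothendieckTopology.W_of_isLocallyBijective _ _

/-- The constant sheaf is the sheaf of locally constant functions. -/
def theta : constantSheaf (KK X) AddCommGrpCat.{u} ≅ lcFunctor X :=
  NatIso.ofComponents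
    (fun A => @asIso _ _ _ _ ((presheafToSheaf (KK X) AddCommGrpCat).map ((etaNat X).app A)) (etaIsoInst X A) ≪≫
      asIso ((sheafificationAdjunction (KK X) AddCommGrpCat).counit.app ((lcFunctor X).obj A)))
    (fun {A B} g => by
      dsimp [constantSheaf]
      show _ ≫ ((presheafToSheaf (KK X) AddCommGrpCat).map ((etaNat X).app B) ≫ _) =
        ((presheafToSheaf (KK X) AddCommGrpCat).map ((etaNat X).app A) ≫ _) ≫ _
      rw [Category.assoc, ← Functor.map_comp_assoc, (etaNat X).naturality g,
        Functor.map_comp_assoc]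
      congr 1
      exact (sheafificationAdjunction (KK X) AddCommGrpCat).counit.naturality ((lcFunctor X).map g))


/-- constant inclusion as an AddMonoidHom -/
def chiHomComp (A : AddCommGrpCat.{u}) (U : ConnOp X) :
    A →+ LocallyConstant (U.obj : Opens X) A where
  toFun := LocallyConstant.const _
  map_zero' := rfl
  map_add' := fun _ _ => rfl

def chiInvComp (A : AddCommGrpCat.{u}) (U : ConnOp X) :
    LocallyConstant (U.obj : Opens X) A →+ A :=
  haveI : Nonempty (U.obj : Opens X) := U.property.1.to_subtype
  { toFun := fun φ => φ (Classical.arbitrary _)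
    map_zero' := rfl
    map_add' := fun _ _ => rfl }

/-- The comparison iso between the constant `I`-diagram and the restriction of the
locally constant sheaf to connected opens. -/
def chi (A : AddCommGrpCat.{u}) :
    (Functor.const (ConnOp X)ᵒᵖ).obj A ≅ (incl X).op ⋙ lcPresheaf X A := by
  refine NatIso.ofComponents (fun U => ?_) (fun {U V} f => ?_)
  · refine Iso.mk
      (show A ⟶ AddCommGrpCat.of (LocallyConstant (U.unop.obj : Opens X) A) from
        AddCommGrpCat.ofHom (chiHomComp X A U.unop))
      (show AddCommGrpCat.of (LocallyConstant (U.unop.obj : Opens X) A) ⟶ A from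
        AddCommGrpCat.ofHom (chiInvComp X A U.unop)) ?_ ?_
    · ext a
      rfl
    · haveI : Nonempty (U.unop.obj : Opens X) := U.unop.property.1.to_subtype
      haveI : PreconnectedSpace (U.unop.obj : Opens X) :=
        Subtype.preconnectedSpace U.unop.property.2.isPreconnected
      ext φ
      exact (LocallyConstant.eq_const
        (show LocallyConstant (U.unop.obj : Opens X) A from φ) _).symm
  · ext a
    rfl

lemma chi_comm {A B : AddCommGrpCat.{u}} (g : A ⟶ B) :
    (chi X A).hom ≫ Functor.whiskerLeft (incl X).op ((lcFunctor X).map g).hom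
      = (Functor.const (ConnOp X)ᵒᵖ).map g ≫ (chi X B).hom := by
  ext U a
  rfl

section Adj
variable [LocallyConnectedSpace X]

def wrapEquiv (F G : Sheaf (KK X) AddCommGrpCat.{u}) : (F.val ⟶ G.val) ≃ (F ⟶ G) :=
  ⟨fun α => ⟨α⟩, fun β => β.hom, fun _ => rfl, fun _ => rfl⟩

def adjEquiv (F : TopCat.Sheaf AddCommGrpCat.{u} X) (A : AddCommGrpCat.{u}) :
    ((connColimitFunctor X).obj F ⟶ A) ≃ (F ⟶ (lcFunctor X).obj A) :=
  (colimConstAdj.homEquiv ((incl X).op ⋙ F.val) A).trans <|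
    ((Iso.refl ((incl X).op ⋙ F.val)).homCongr (chi X A)).trans <|
      (Functor.IsCoverDense.restrictHomEquivHom
        (ℱ := F.val) (ℱ' := (lcFunctor X).obj A)).trans
        (wrapEquiv X F ((lcFunctor X).obj A))

lemma restrict_comp_right (P : (Opens X)ᵒᵖ ⥤ AddCommGrpCat.{u})
    {G G' : Sheaf (KK X) AddCommGrpCat.{u}}
    (β : (incl X).op ⋙ P ⟶ (incl X).op ⋙ G.val) (γ : G ⟶ G') :
    (Functor.IsCoverDense.restrictHomEquivHom (ℱ := P) (ℱ' := G'))
        (β ≫ Functor.whiskerLeft (incl X).op γ.hom)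
      = (Functor.IsCoverDense.restrictHomEquivHom (ℱ := P) (ℱ' := G)) β ≫ γ.hom := by
  apply (Functor.IsCoverDense.restrictHomEquivHom (G := incl X) (ℱ := P) (ℱ' := G')).symm.injective
  rw [Equiv.symm_apply_apply]
  show β ≫ Functor.whiskerLeft (incl X).op γ.hom = Functor.whiskerLeft (incl X).op (_ ≫ γ.hom)
  rw [Functor.whiskerLeft_comp]
  congr 1
  exact (Functor.IsCoverDense.sheafHom_restrict_eq β).symm

lemma adjEquiv_symm_val (F : TopCat.Sheaf AddCommGrpCat.{u} X) (A : AddCommGrpCat.{u})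
    (β : F ⟶ (lcFunctor X).obj A) :
    (adjEquiv X F A).symm β
      = (colimConstAdj.homEquiv ((incl X).op ⋙ F.val) A).symm
          (Functor.whiskerLeft (incl X).op β.hom ≫ (chi X A).inv) := by
  simp only [adjEquiv, Equiv.symm_trans_apply]
  rfl

def ADJ : connColimitFunctor X ⊣ lcFunctor X :=
  Adjunction.mkOfHomEquiv
    { homEquiv := adjEquiv X
      homEquiv_naturality_left_symm := by
        intro F F' A f g
        show (adjEquiv X F A).symm (f ≫ g) = _
        erw [adjEquiv_symm_val, adjEquiv_symm_val,
          show ((f ≫ g : F ⟶ (lcFunctor X).obj A)).hom = f.hom ≫ g.hom from rfl,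
          Functor.whiskerLeft_comp, Category.assoc, Adjunction.homEquiv_naturality_left_symm]
        rfl
      homEquiv_naturality_right := by
        intro F A A' f g
        show adjEquiv X F A' (f ≫ g) = adjEquiv X F A f ≫ (lcFunctor X).map g
        apply Sheaf.hom_ext
        simp only [adjEquiv, Equiv.trans_apply]
        show (Functor.IsCoverDense.restrictHomEquivHom (ℱ := F.val)
            (ℱ' := (lcFunctor X).obj A')) _ = (Functor.IsCoverDense.restrictHomEquivHom
            (ℱ := F.val) (ℱ' := (lcFunctor X).obj A)) _ ≫ ((lcFunctor X).map g).hom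
        erw [← restrict_comp_right]
        congr 1
    }

end Adj
end ConnColimAux
end


/-- For a locally connected space `X`, the cosections functor `L(X,-)`
(the left adjoint of the constant-sheaf functor) is naturally isomorphic to
`F ↦ colim_{i ∈ I} F(U_i)` over the poset `I` of nonempty connected open subsets of `X`
ordered by reverse inclusion; equivalently, the latter functor is left adjoint to the
constant-sheaf functor `π⁻¹ : Ab ⥤ Shv(X, Ab)`. -/
theorem connColimitFunctor_is_cosections (X : TopCat.{u}) [LocallyConnectedSpace X] :
    Nonempty (connColimitFunctor X ⊣
      constantSheaf (Opens.grothendieckTopology X) AddCommGrpCat.{u}) := by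
  exact ⟨(ConnColimAux.ADJ X).ofNatIsoRight (ConnColimAux.theta X).symm⟩
end

section
/- Let X be a locally connected topological space and G an abelian group. Then L(X, G) ≅ G^{⊕ π₀(X)}, the direct sum of copies of G indexed by the set of connected components of X, where G also denotes the constant sheaf with value G. -/
open CategoryTheory CategoryTheory.Limits TopologicalSpace DirectSum

universe u

namespace CosectionsAux

open Opposite

attribute [local instance] Classical.propDecidable

variable (X : TopCat.{u})

/-- The continuous inclusion map between open subsets. -/
def restr {U V : Opens X} (h : V ≤ U) : C(V, U) :=
  ⟨fun x => ⟨x.1, h x.2⟩, Continuous.subtype_mk continuous_subtype_val _⟩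

variable (A : AddCommGrpCat.{u})

/-- The presheaf of locally constant functions with values in `A`. -/
noncomputable def LCP : (Opens X)ᵒᵖ ⥤ AddCommGrpCat.{u} where
  obj U := AddCommGrpCat.of (LocallyConstant U.unop A)
  map {U V} i := AddCommGrpCat.ofHom (LocallyConstant.comapAddMonoidHom (restr X (leOfHom i.unop)))
  map_id U := by ext f; rfl
  map_comp f g := by ext f; rfl

variable {X A}

/-- Interpret a section of `LCP` as a locally constant function. -/
def secfun {U : Opens X} (s : (LCP X A).obj (op U)) : LocallyConstant U A := s

lemma compat_eval {ι : Type u} {U : ι → Opens X} {sf : ∀ i, (LCP X A).obj (op (U i))}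
    (h : TopCat.Presheaf.IsCompatible (LCP X A) U sf) {i j : ι} {x : X}
    (hi : x ∈ U i) (hj : x ∈ U j) : secfun (sf i) ⟨x, hi⟩ = secfun (sf j) ⟨x, hj⟩ :=
  DFunLike.congr_fun (congrArg secfun (h i j)) ⟨x, hi, hj⟩

variable (X A)

theorem isSheaf_LCP : TopCat.Presheaf.IsSheaf (LCP X A) := by
  rw [TopCat.Presheaf.isSheaf_iff_isSheafUniqueGluing]
  intro ι U sf hc
  have hex : ∀ x : (iSup U : Opens X), ∃ i, x.1 ∈ U i := fun x => Opens.mem_iSup.mp x.2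
  choose ix hix using hex
  have hlc : IsLocallyConstant (fun x : (iSup U : Opens X) => secfun (sf (ix x)) ⟨x.1, hix x⟩) := by
    rw [IsLocallyConstant.iff_exists_open]
    intro x
    obtain ⟨V, hV, hxV, hconst⟩ :=
      (secfun (sf (ix x))).isLocallyConstant.exists_open ⟨x.1, hix x⟩
    obtain ⟨W, hW, hVW⟩ := isOpen_induced_iff.mp hV
    refine ⟨Subtype.val ⁻¹' (W ∩ U (ix x)), (hW.inter (U (ix x)).2).preimage continuous_subtype_val,
      ⟨?_, hix x⟩, ?_⟩
    · have : (⟨x.1, hix x⟩ : (U (ix x) : Opens X)) ∈ V := hxV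
      rw [← hVW] at this; exact this
    · rintro y ⟨hyW, hyU⟩
      have h1 : secfun (sf (ix y)) ⟨y.1, hix y⟩ = secfun (sf (ix x)) ⟨y.1, hyU⟩ :=
        compat_eval hc _ _
      have h2 : secfun (sf (ix x)) ⟨y.1, hyU⟩ = secfun (sf (ix x)) ⟨x.1, hix x⟩ := by
        apply hconst
        rw [← hVW]; exact hyW
      exact h1.trans h2
  refine ⟨(⟨fun x => secfun (sf (ix x)) ⟨x.1, hix x⟩, hlc⟩ : LocallyConstant _ A),
    fun i => ?_, fun t ht => ?_⟩
  · show ((LCP X A).map (Opens.leSupr U i).op _ : (LCP X A).obj _) = sf i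
    apply LocallyConstant.ext
    intro y
    exact compat_eval hc _ _
  · apply LocallyConstant.ext
    intro y
    exact DFunLike.congr_fun (congrArg secfun (ht (ix y))) ⟨y.1, hix y⟩

/-- The sheaf of locally constant functions, as a functor in the group. -/
noncomputable def LCSh : AddCommGrpCat.{u} ⥤ Sheaf (Opens.grothendieckTopology X) AddCommGrpCat.{u} where
  obj A := ⟨LCP X A, isSheaf_LCP X A⟩
  map {A B} f := ⟨{ app := fun U => AddCommGrpCat.ofHom (LocallyConstant.mapAddMonoidHom f.hom)
                    naturality := by intros; ext g; rfl }⟩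
  map_id A := by apply Sheaf.hom_ext; ext U g; rfl
  map_comp f g := by apply Sheaf.hom_ext; ext U g; rfl

/-- The inclusion of the constant presheaf into the locally constant sheaf. -/
noncomputable def ηNat : (Functor.const (Opens X)ᵒᵖ : AddCommGrpCat.{u} ⥤ _) ⟶
    LCSh X ⋙ sheafToPresheaf _ _ where
  app A := { app := fun U => AddCommGrpCat.ofHom LocallyConstant.constAddMonoidHom
             naturality := by intros; ext g; rfl }
  naturality A B f := by ext U g; rfl

instance ηNat_locInj (A : AddCommGrpCat.{u}) :
    Presheaf.IsLocallyInjective (Opens.grothendieckTopology X) ((ηNat X).app A) where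
  equalizerSieve_mem {U} x y h := by
    intro z hz
    refine ⟨U.unop, 𝟙 _, ?_, hz⟩
    have h' : (LocallyConstant.const U.unop x : LocallyConstant U.unop A) =
        LocallyConstant.const U.unop y := h
    have : x = y := DFunLike.congr_fun h' (⟨z, hz⟩ : U.unop)
    simp [Presheaf.equalizerSieve, this]

instance ηNat_locSurj (A : AddCommGrpCat.{u}) :
    Presheaf.IsLocallySurjective (Opens.grothendieckTopology X) ((ηNat X).app A) where
  imageSieve_mem {U} s := by
    intro z hz
    let s' : LocallyConstant U A := s
    obtain ⟨V, hV, hzV, hconst⟩ := s'.isLocallyConstant.exists_open ⟨z, hz⟩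
    obtain ⟨W, hW, hVW⟩ := isOpen_induced_iff.mp hV
    refine ⟨⟨W, hW⟩ ⊓ U, homOfLE inf_le_right, ?_, ?_⟩
    · refine ⟨s' ⟨z, hz⟩, ?_⟩
      show LocallyConstant.const _ _ = LocallyConstant.comap (restr X _) s'
      apply LocallyConstant.ext
      rintro ⟨y, hyW, hyU⟩
      show s' ⟨z, hz⟩ = s' ⟨y, hyU⟩
      refine (hconst _ ?_).symm
      rw [← hVW]; exact hyW
    · constructor
      · rw [← hVW] at hzV; exact hzV
      · exact hz

/-- Comparison map from the constant sheaf to the locally constant sheaf. -/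
noncomputable def ν : constantSheaf (Opens.grothendieckTopology X) AddCommGrpCat.{u} ⟶ LCSh X where
  app A := (presheafToSheaf _ _).map ((ηNat X).app A) ≫
    (sheafificationAdjunction _ _).counit.app ((LCSh X).obj A)
  naturality A B f := by
    have h1 : (constantSheaf (Opens.grothendieckTopology X) AddCommGrpCat.{u}).map f =
        (presheafToSheaf _ _).map ((Functor.const (Opens X)ᵒᵖ).map f) := rfl
    rw [h1]
    dsimp only [constantSheaf, Functor.comp_obj]
    rw [← Category.assoc, ← Functor.map_comp, (ηNat X).naturality f]
    have h2 := ((sheafificationAdjunction (Opens.grothendieckTopology X)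
      AddCommGrpCat.{u}).counit).naturality ((LCSh X).map f)
    dsimp at h2 ⊢
    rw [Functor.map_comp, Category.assoc, h2, ← Category.assoc]

instance ν_iso (A : AddCommGrpCat.{u}) : IsIso ((ν X).app A) := by
  have hW : (Opens.grothendieckTopology X).W ((ηNat X).app A) :=
    GrothendieckTopology.W_of_isLocallyBijective _ _
  rw [GrothendieckTopology.W_iff] at hW
  exact @IsIso.comp_isIso _ _ _ _ _ _ _ hW inferInstance

instance : IsIso (ν X) := NatIso.isIso_of_isIso_app _

/-- The functor sending `A` to the group of `π₀(X)`-indexed families in `A`. -/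
def PiF : AddCommGrpCat.{u} ⥤ AddCommGrpCat.{u} where
  obj A := AddCommGrpCat.of (ConnectedComponents X → A)
  map {A B} f := AddCommGrpCat.ofHom (AddMonoidHom.compLeft f.hom _)
  map_id A := by ext g; rfl
  map_comp f g := by ext g; rfl

/-- The functor sending `B` to the direct sum of `π₀(X)` copies of `B`. -/
noncomputable def DS : AddCommGrpCat.{u} ⥤ AddCommGrpCat.{u} where
  obj B := AddCommGrpCat.of (⨁ (_ : ConnectedComponents X), B)
  map {B C} f := AddCommGrpCat.ofHom (DirectSum.toAddMonoid
    (fun i => (DirectSum.of (fun _ : ConnectedComponents X => C) i).comp f.hom))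
  map_id B := by
    apply AddCommGrpCat.hom_ext
    refine DirectSum.addHom_ext fun i b => ?_
    simp
  map_comp f g := by
    apply AddCommGrpCat.hom_ext
    refine DirectSum.addHom_ext fun i b => ?_
    show _ = (DirectSum.toAddMonoid _).comp (DirectSum.toAddMonoid _) _
    simp

/-- The direct sum / product adjunction. -/
noncomputable def adjDS : DS X ⊣ PiF X :=
  Adjunction.mkOfHomEquiv
    { homEquiv := fun B A =>
        { toFun := fun f => AddCommGrpCat.ofHom
            { toFun := fun b i => f (DirectSum.of (fun _ : ConnectedComponents X => B) i b)
              map_zero' := by funext i; simp; exact map_zero _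
              map_add' := fun b b' => by funext i; simp [map_add]; exact map_add _ _ _ }
          invFun := fun g => AddCommGrpCat.ofHom (DirectSum.toAddMonoid
            (fun i => (Pi.evalAddMonoidHom (fun _ : ConnectedComponents X => (A : Type u)) i).comp g.hom))
          left_inv := fun f => AddCommGrpCat.hom_ext <| DirectSum.addHom_ext fun i b => by
            simp only [AddCommGrpCat.hom_ofHom]
            rw [DirectSum.toAddMonoid_of]; rfl
          right_inv := fun g => by
            ext b i
            show (DirectSum.toAddMonoid
              (fun i => (Pi.evalAddMonoidHom (fun _ : ConnectedComponents X => (A : Type u)) i).comp g.hom))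
              (DirectSum.of (fun _ : ConnectedComponents X => B) i b) = g b i
            rw [DirectSum.toAddMonoid_of]; rfl }
      homEquiv_naturality_left_symm := fun {B' B A} f g => by
        apply AddCommGrpCat.hom_ext
        refine DirectSum.addHom_ext fun i b => ?_
        show (DirectSum.toAddMonoid
            (fun i => (Pi.evalAddMonoidHom (fun _ : ConnectedComponents X => (A : Type u)) i).comp (f ≫ g).hom))
            (DirectSum.of (fun _ : ConnectedComponents X => B') i b) =
          (DirectSum.toAddMonoid
            (fun i => (Pi.evalAddMonoidHom (fun _ : ConnectedComponents X => (A : Type u)) i).comp g.hom))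
            ((DirectSum.toAddMonoid
              (fun i => (DirectSum.of (fun _ : ConnectedComponents X => (B : Type u)) i).comp f.hom))
              (DirectSum.of (fun _ : ConnectedComponents X => B') i b))
        simp only [DirectSum.toAddMonoid_of, AddMonoidHom.comp_apply]
        rfl
      homEquiv_naturality_right := fun {B A A'} f k => by
        ext b; funext i
        rfl }

variable [LocallyConnectedSpace X]

/-- From a family indexed by connected components to a locally constant function. -/
def toLC : (ConnectedComponents X → A) →+ LocallyConstant ((⊤ : Opens X) : Type u) A where
  toFun g :=
    { toFun := fun x => g (ConnectedComponents.mk x.1)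
      isLocallyConstant := by
        have h1 : IsLocallyConstant (fun x : X => g (ConnectedComponents.mk x)) := by
          rw [IsLocallyConstant.iff_exists_open]
          intro x
          refine ⟨connectedComponent x, isOpen_connectedComponent, mem_connectedComponent,
            fun y hy => ?_⟩
          have : ConnectedComponents.mk y = ConnectedComponents.mk x :=
            ConnectedComponents.coe_eq_coe'.mpr hy
          rw [this]
        exact h1.comp_continuous continuous_subtype_val }
  map_zero' := rfl
  map_add' g g' := rfl

lemma toLC_bijective : Function.Bijective (toLC X A) := by
  constructor
  · intro g g' h
    funext c
    obtain ⟨x, rfl⟩ := ConnectedComponents.surjective_coe c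
    exact DFunLike.congr_fun h ⟨x, trivial⟩
  · intro f
    have hf' : IsLocallyConstant (fun x : X => f ⟨x, trivial⟩) :=
      f.isLocallyConstant.comp_continuous (Continuous.subtype_mk continuous_id fun x => trivial)
    refine ⟨Quotient.lift (fun x : X => f ⟨x, trivial⟩) ?_, ?_⟩
    · intro a b hab
      have hb : b ∈ connectedComponent a := by
        have : connectedComponent a = connectedComponent b := hab
        rw [this]; exact mem_connectedComponent
      exact (hf'.apply_eq_of_isPreconnected isPreconnected_connectedComponent
        mem_connectedComponent hb)
    · apply LocallyConstant.ext
      rintro ⟨x, hx⟩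
      rfl

/-- The global sections functor on sheaves over `X`. -/
noncomputable abbrev Γ : Sheaf (Opens.grothendieckTopology X) AddCommGrpCat.{u} ⥤ AddCommGrpCat.{u} :=
  (sheafSections (Opens.grothendieckTopology X) AddCommGrpCat.{u}).obj (op (⊤ : Opens X))

/-- Global sections of the locally constant sheaf are families indexed by `π₀(X)`. -/
noncomputable def part2 : PiF X ≅ LCSh X ⋙ Γ X :=
  NatIso.ofComponents
    (fun A => (AddEquiv.ofBijective (toLC X A) (toLC_bijective X A)).toAddCommGrpIso)
    (fun {A B} f => by
      ext g
      apply LocallyConstant.ext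
      intro x
      rfl)

end CosectionsAux

open CosectionsAux in
/-- Let `X` be locally connected, `L(X,-)` the cosections functor (i.e. a left
adjoint of the constant-sheaf functor `π⁻¹ : Ab ⥤ Shv(X,Ab)`), and `G` an abelian group. Then
`L(X, G) ≅ G^{⊕ π₀(X)}`, the direct sum of copies of `G` indexed by the connected components
of `X`, where `G` also denotes the constant sheaf with value `G`. -/
theorem cosections_constant_sheaf (X : TopCat.{u}) [LocallyConnectedSpace X]
    (L : TopCat.Sheaf AddCommGrpCat.{u} X ⥤ AddCommGrpCat.{u})
    (adj : L ⊣ constantSheaf (Opens.grothendieckTopology X) AddCommGrpCat.{u})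
    (G : AddCommGrpCat.{u}) :
    Nonempty (L.obj ((constantSheaf (Opens.grothendieckTopology X) AddCommGrpCat.{u}).obj G) ≅
      AddCommGrpCat.of (⨁ (_ : ConnectedComponents X), G)) := by
  let isoPi : PiF X ≅ constantSheaf (Opens.grothendieckTopology X) AddCommGrpCat.{u} ⋙ Γ X :=
    part2 X ≪≫ (Functor.isoWhiskerRight (asIso (ν X)) (Γ X)).symm
  let adjC := (constantSheafAdj (Opens.grothendieckTopology X) AddCommGrpCat.{u}
    (isTerminalTop : IsTerminal (⊤ : Opens X))).comp adj
  let adjD := (adjDS X).ofNatIsoRight isoPi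
  exact ⟨(Adjunction.leftAdjointUniq adjC adjD).app G⟩
end

section
/- Let X be a locally connected space and F a sheaf of abelian groups on X. Define cos(F)(U) := L(U, F|_U) for open U ⊆ X, with corestriction maps induced by the covariant functoriality of cosections along open inclusions. Then cos(F) is a cosheaf: for every open U and every open cover U = ⋃_i U_i, the sequence ⊕_{i,j} cos(F)(U_i ∩ U_j) → ⊕_i cos(F)(U_i) → cos(F)(U) → 0 is exact. -/
open CategoryTheory CategoryTheory.Limits TopologicalSpace Opposite

noncomputable section

abbrev Shv (X : TopCat.{u}) := TopCat.Sheaf AddCommGrpCat.{u} X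

variable {X : TopCat.{u}}

/-- connected nonempty opens contained in `U` -/
abbrev ConnIn (X : TopCat.{u}) (U : Opens X) : Type u :=
  ObjectProperty.FullSubcategory (fun W : Opens X => W ≤ U ∧ (W : Set X).Nonempty ∧ IsConnected (W : Set X))

def dgm (F : Shv X) (U : Opens X) : (ConnIn X U)ᵒᵖ ⥤ AddCommGrpCat.{u} :=
  (ObjectProperty.ι _).op ⋙ F.val

def connInMap {V U : Opens X} (h : V ≤ U) : ConnIn X V ⥤ ConnIn X U :=
  ObjectProperty.ιOfLE (fun W hw => ⟨le_trans hw.1 h, hw.2⟩)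

/-- The associated precosheaf of a sheaf `F`:
`cos(F)(U) = L(U, F|_U) = colim_{W ⊆ U connected nonempty} F(W)`. -/
def cosPre (F : Shv X) : Opens X ⥤ AddCommGrpCat.{u} where
  obj U := colimit (dgm F U)
  map {V U} h := colimit.pre (dgm F U) (connInMap h.le).op
  map_id U := by
    apply colimit.hom_ext (F := dgm F U)
    intro j
    rw [Category.comp_id]
    exact colimit.ι_pre (dgm F U) (connInMap le_rfl).op j
  map_comp {V W U} h h' := by
    apply colimit.hom_ext (F := dgm F V)
    intro j
    have A : colimit.ι (dgm F V) j ≫ colimit.pre (dgm F U) (connInMap (leOfHom (h ≫ h'))).op =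
        colimit.ι (dgm F U) ((connInMap (leOfHom (h ≫ h'))).op.obj j) :=
      colimit.ι_pre (dgm F U) (connInMap (leOfHom (h ≫ h'))).op j
    have B : colimit.ι (dgm F V) j ≫ colimit.pre (dgm F W) (connInMap (leOfHom h)).op =
        colimit.ι (dgm F W) ((connInMap (leOfHom h)).op.obj j) :=
      colimit.ι_pre (dgm F W) (connInMap (leOfHom h)).op j
    have C : colimit.ι (dgm F W) ((connInMap (leOfHom h)).op.obj j) ≫
        colimit.pre (dgm F U) (connInMap (leOfHom h')).op =
        colimit.ι (dgm F U) ((connInMap (leOfHom h')).op.obj ((connInMap (leOfHom h)).op.obj j)) :=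
      colimit.ι_pre (dgm F U) (connInMap (leOfHom h')).op _
    exact A.trans (C.symm.trans ((congrArg
      (fun f => f ≫ colimit.pre (dgm F U) (connInMap (leOfHom h')).op) B).symm.trans
      (Category.assoc _ _ _)))



variable {X : TopCat.{u}}

/-- A precosheaf (of abelian groups) on `X` is a covariant functor on open subsets. -/
abbrev Precosheaf (X : TopCat.{u}) := Opens X ⥤ AddCommGrpCat.{u}

/-- The map `⊕_i Q(U_i) → Q(U)` for a cover `U = ⨆ U_i`, given by the corestrictions. -/
def coverSum (Q : Precosheaf X) {ι : Type u} [DecidableEq ι] (V : ι → Opens X) :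
    (DirectSum ι (fun i => (Q.obj (V i) : Type u))) →+ Q.obj (⨆ i, V i) :=
  DirectSum.toAddMonoid fun i => (Q.map (homOfLE (le_iSup V i))).hom

/-- The map `⊕_{i,j} Q(U_i ∩ U_j) → ⊕_i Q(U_i)`, given on the `(i,j)` component by the
difference of the corestrictions into the `i`-th and `j`-th summands. -/
def coverDiff (Q : Precosheaf X) {ι : Type u} [DecidableEq ι] (V : ι → Opens X) :
    (DirectSum (ι × ι) (fun p => (Q.obj (V p.1 ⊓ V p.2) : Type u))) →+ DirectSum ι (fun i => (Q.obj (V i) : Type u)) :=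
  DirectSum.toAddMonoid fun p =>
    ((DirectSum.of (fun i => (Q.obj (V i) : Type u)) p.1).comp
        ((Q.map (homOfLE inf_le_left)).hom : Q.obj (V p.1 ⊓ V p.2) →+ Q.obj (V p.1))) -
    ((DirectSum.of (fun i => (Q.obj (V i) : Type u)) p.2).comp
        ((Q.map (homOfLE inf_le_right)).hom : Q.obj (V p.1 ⊓ V p.2) →+ Q.obj (V p.2)))

/-- A precosheaf is a cosheaf if for every open cover `U = ⨆ᵢ Uᵢ` the sequence
`⊕_{i,j} Q(U_i ∩ U_j) → ⊕_i Q(U_i) → Q(U) → 0` is exact. -/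
def IsCosheaf (Q : Precosheaf X) : Prop :=
  ∀ (ι : Type u) (_ : DecidableEq ι) (V : ι → Opens X),
    Function.Surjective (coverSum Q V) ∧
    AddMonoidHom.range (coverDiff Q V) = AddMonoidHom.ker (coverSum Q V)



section Aux

universe u

-- ============ aux ============

theorem colim_gen {J : Type u} [SmallCategory J] (D : J ⥤ AddCommGrpCat.{u}) (x : ↑(colimit D)) :
    x ∈ ⨆ j, AddMonoidHom.range ((colimit.ι D j).hom : ↑(D.obj j) →+ ↑(colimit D)) := by
  let S : AddSubgroup ↑(colimit D) :=
    ⨆ j, AddMonoidHom.range ((colimit.ι D j).hom : ↑(D.obj j) →+ ↑(colimit D))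
  let c : Cocone D :=
    { pt := AddCommGrpCat.of S
      ι :=
      { app := fun j => AddCommGrpCat.ofHom <| AddMonoidHom.codRestrict
          ((colimit.ι D j).hom : ↑(D.obj j) →+ ↑(colimit D)) S.toAddSubmonoid
          (fun y => AddSubgroup.mem_iSup_of_mem j ⟨y, rfl⟩)
        naturality := by
          intro j j' f
          ext y
          apply Subtype.ext
          show (colimit.ι D j') ((D.map f) y) = (colimit.ι D j) y
          exact ConcreteCategory.congr_hom (colimit.w D f) y } }
  have h : colimit.desc D c ≫ AddCommGrpCat.ofHom S.subtype = 𝟙 (colimit D) := by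
    apply colimit.hom_ext
    intro j
    rw [← Category.assoc, colimit.ι_desc, Category.comp_id]
    rfl
  have h2 : (AddCommGrpCat.ofHom S.subtype) (colimit.desc D c x) = x :=
    ConcreteCategory.congr_hom h x
  rw [← h2]
  exact (colimit.desc D c x).2

section Main

variable [LocallyConnectedSpace ↑X] (F : Shv X) {ι : Type u} [DecidableEq ι] (V : ι → Opens X)

/-- restriction as AddMonoidHom -/
def rsHom {A B : Opens X} (h : B ≤ A) : ↑(F.val.obj (op A)) →+ ↑(F.val.obj (op B)) :=
  ((F.val.map (homOfLE h).op).hom : ↑(F.val.obj (op A)) →+ ↑(F.val.obj (op B)))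

theorem rs_rs {A B C : Opens X} (h1 : C ≤ B) (h2 : B ≤ A) (s : ↑(F.val.obj (op A))) :
    rsHom F h1 (rsHom F h2 s) = rsHom F (h1.trans h2) s := by
  show (F.val.map (homOfLE h2).op ≫ F.val.map (homOfLE h1).op) s = _
  rw [← F.val.map_comp, ← op_comp, homOfLE_comp]
  rfl

/-- the generator map `F(C) →+ ⊕_i cos(F)(V_i)` for `C` connected nonempty `⊆ V i` -/
def genHom (i : ι) (C : ConnIn X (V i)) :
    ↑(F.val.obj (op C.obj)) →+ DirectSum ι (fun i => ((cosPre F).obj (V i) : Type u)) :=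
  (DirectSum.of (fun i => ((cosPre F).obj (V i) : Type u)) i).comp
    ((colimit.ι (dgm F (V i)) (op C)).hom : ↑((dgm F (V i)).obj (op C)) →+ ↑(colimit (dgm F (V i))))

theorem ι_shrink {A : Opens X} (C C' : ConnIn X A) (hle : C'.obj ≤ C.obj)
    (t : ↑(F.val.obj (op C.obj))) :
    colimit.ι (dgm F A) (op C) t = colimit.ι (dgm F A) (op C') (rsHom F hle t) := by
  have h := colimit.w (dgm F A) ((ObjectProperty.homMk (homOfLE hle) : C' ⟶ C).op)
  exact (ConcreteCategory.congr_hom h t).symm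

theorem gen_shrink (i : ι) (C C' : ConnIn X (V i)) (hle : C'.obj ≤ C.obj)
    (t : ↑(F.val.obj (op C.obj))) :
    genHom F V i C t = genHom F V i C' (rsHom F hle t) := by
  rw [genHom, genHom]
  exact congrArg (DirectSum.of (fun i => ((cosPre F).obj (V i) : Type u)) i)
    (ι_shrink F C C' hle t)

theorem map_ι {A B : Opens X} (h : A ≤ B) (C : ConnIn X A) (t : ↑(F.val.obj (op C.obj))) :
    (cosPre F).map (homOfLE h) (colimit.ι (dgm F A) (op C) t)
      = colimit.ι (dgm F B) (op ((connInMap h).obj C)) t := by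
  exact ConcreteCategory.congr_hom (colimit.ι_pre (dgm F B) (connInMap h).op (op C)) t


/-- `C` is an admissible test open for `W` and index `i`. -/
def Adm {X : TopCat.{u}} {ι : Type u} (V : ι → Opens X) (W : Opens X) (i : ι) (C : Opens X) : Prop :=
  C ≤ W ∧ C ≤ V i ∧ (C : Set X).Nonempty ∧ IsConnected (C : Set X)

def Adm.toConn {X : TopCat.{u}} {ι : Type u} {V : ι → Opens X} {W : Opens X} {i : ι} {C : Opens X}
    (h : Adm V W i C) : ConnIn X (V i) :=
  ⟨C, h.2.1, h.2.2.1, h.2.2.2⟩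

theorem coverSum_of (F : Shv X) {ι : Type u} [DecidableEq ι] (V : ι → Opens X) (i : ι)
    (ξ : ((cosPre F).obj (V i) : Type u)) :
    coverSum (cosPre F) V (DirectSum.of _ i ξ) = (cosPre F).map (homOfLE (le_iSup V i)) ξ :=
  DirectSum.toAddMonoid_of _ _ _

theorem coverSum_gen (F : Shv X) [LocallyConnectedSpace ↑X] {ι : Type u} [DecidableEq ι]
    (V : ι → Opens X) (i : ι) (C : ConnIn X (V i)) (t : ↑(F.val.obj (op C.obj))) :
    coverSum (cosPre F) V (genHom F V i C t)
      = colimit.ι (dgm F (⨆ i, V i)) (op ((connInMap (le_iSup V i)).obj C)) t := by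
  rw [genHom]
  exact (coverSum_of F V i _).trans (map_ι F (le_iSup V i) C t)

theorem gen_diff (F : Shv X) [LocallyConnectedSpace ↑X] {ι : Type u} [DecidableEq ι]
    (V : ι → Opens X) (i j : ι) (C : Opens X) (hCi : C ≤ V i) (hCj : C ≤ V j)
    (hne : (C : Set X).Nonempty) (hconn : IsConnected (C : Set X))
    (t : ↑(F.val.obj (op C))) :
    genHom F V i ⟨C, hCi, hne, hconn⟩ t - genHom F V j ⟨C, hCj, hne, hconn⟩ t
      ∈ AddMonoidHom.range (coverDiff (cosPre F) V) := by
  refine ⟨DirectSum.of (fun p : ι × ι => ((cosPre F).obj (V p.1 ⊓ V p.2) : Type u)) (i, j)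
    (colimit.ι (dgm F (V i ⊓ V j)) (op ⟨C, le_inf hCi hCj, hne, hconn⟩) t), ?_⟩
  rw [coverDiff]
  refine (DirectSum.toAddMonoid_of _ _ _).trans ?_
  have h1 := map_ι F (inf_le_left : V i ⊓ V j ≤ V i) ⟨C, le_inf hCi hCj, hne, hconn⟩ t
  have h2 := map_ι F (inf_le_right : V i ⊓ V j ≤ V j) ⟨C, le_inf hCi hCj, hne, hconn⟩ t
  rw [genHom, genHom]
  exact congrArg₂ (fun a b => DirectSum.of (fun i => ((cosPre F).obj (V i) : Type u)) i a
    - DirectSum.of (fun i => ((cosPre F).obj (V i) : Type u)) j b) h1 h2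


theorem conn_nbhd {X : TopCat.{u}} [LocallyConnectedSpace ↑X] (A : Opens ↑X) {x : ↑X}
    (hx : x ∈ A) :
    ∃ E : Opens ↑X, x ∈ E ∧ E ≤ A ∧ (E : Set X).Nonempty ∧ IsConnected (E : Set X) := by
  obtain ⟨s, hsub, hop, hxs, hconn⟩ := locallyConnectedSpace_iff_subsets_isOpen_isConnected.mp
    ‹_› x A (A.2.mem_nhds hx)
  exact ⟨⟨s, hop⟩, hxs, hsub, ⟨x, hxs⟩, hconn⟩

theorem key_overlap (F : Shv X) [LocallyConnectedSpace ↑X] {ι : Type u} [DecidableEq ι]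
    (V : ι → Opens ↑X) (W : Opens ↑X) (s : ↑(F.val.obj (op W)))
    {i : ι} {C : Opens ↑X} (hC : Adm V W i C) {j : ι} {D : Opens ↑X} (hD : Adm V W j D)
    {x : ↑X} (hxC : x ∈ C) (hxD : x ∈ D) :
    genHom F V i hC.toConn (rsHom F hC.1 s) - genHom F V j hD.toConn (rsHom F hD.1 s)
      ∈ AddMonoidHom.range (coverDiff (cosPre F) V) := by
  obtain ⟨E, hxE, hle, hne, hconn⟩ := conn_nbhd (C ⊓ D) ⟨hxC, hxD⟩
  have hEC : E ≤ C := hle.trans inf_le_left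
  have hED : E ≤ D := hle.trans inf_le_right
  have e1 : genHom F V i hC.toConn (rsHom F hC.1 s)
      = genHom F V i ⟨E, hEC.trans hC.2.1, hne, hconn⟩ (rsHom F ((hEC.trans hC.1 : E ≤ W)) s) :=
    (gen_shrink F V i hC.toConn ⟨E, hEC.trans hC.2.1, hne, hconn⟩ hEC (rsHom F hC.1 s)).trans
      (congrArg _ (rs_rs F hEC hC.1 s))
  have e2 : genHom F V j hD.toConn (rsHom F hD.1 s)
      = genHom F V j ⟨E, hED.trans hD.2.1, hne, hconn⟩ (rsHom F ((hEC.trans hC.1 : E ≤ W)) s) :=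
    (gen_shrink F V j hD.toConn ⟨E, hED.trans hD.2.1, hne, hconn⟩ hED (rsHom F hD.1 s)).trans
      (congrArg _ (rs_rs F hED hD.1 s))
  rw [e1, e2]
  exact gen_diff F V i j E (hEC.trans hC.2.1) (hED.trans hD.2.1) hne hconn _

theorem key (F : Shv X) [LocallyConnectedSpace ↑X] {ι : Type u} [DecidableEq ι]
    (V : ι → Opens ↑X) (W : Opens ↑X) (hWU : W ≤ ⨆ i, V i)
    (hWconn : IsPreconnected (W : Set X)) (s : ↑(F.val.obj (op W)))
    {i₀ : ι} {C₀ : Opens ↑X} (h₀ : Adm V W i₀ C₀)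
    {i₁ : ι} {C₁ : Opens ↑X} (h₁ : Adm V W i₁ C₁) :
    genHom F V i₁ h₁.toConn (rsHom F h₁.1 s) - genHom F V i₀ h₀.toConn (rsHom F h₀.1 s)
      ∈ AddMonoidHom.range (coverDiff (cosPre F) V) := by
  classical
  set R := AddMonoidHom.range (coverDiff (cosPre F) V) with hR
  set base := genHom F V i₀ h₀.toConn (rsHom F h₀.1 s) with hbase
  let O : Set ↑X := {x | ∃ (i : ι) (C : Opens ↑X) (h : Adm V W i C), x ∈ C ∧
    genHom F V i h.toConn (rsHom F h.1 s) - base ∈ R}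
  let O' : Set ↑X := {x | ∃ (i : ι) (C : Opens ↑X) (h : Adm V W i C), x ∈ C ∧
    genHom F V i h.toConn (rsHom F h.1 s) - base ∉ R}
  have hOopen : IsOpen O := by
    refine isOpen_iff_mem_nhds.mpr ?_
    rintro x ⟨i, C, h, hxC, hg⟩
    exact Filter.mem_of_superset (C.2.mem_nhds hxC) (fun y hy => ⟨i, C, h, hy, hg⟩)
  have hO'open : IsOpen O' := by
    refine isOpen_iff_mem_nhds.mpr ?_
    rintro x ⟨i, C, h, hxC, hg⟩
    exact Filter.mem_of_superset (C.2.mem_nhds hxC) (fun y hy => ⟨i, C, h, hy, hg⟩)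
  have hdisj : ∀ x, x ∈ O → x ∈ O' → False := by
    rintro x ⟨i, C, h, hxC, hg⟩ ⟨j, D, h', hxD, hb⟩
    apply hb
    have k1 := key_overlap F V W s h' h hxD hxC
    have e : genHom F V j h'.toConn (rsHom F h'.1 s) - base
        = (genHom F V j h'.toConn (rsHom F h'.1 s) - genHom F V i h.toConn (rsHom F h.1 s))
          + (genHom F V i h.toConn (rsHom F h.1 s) - base) := by abel
    rw [e]; exact add_mem k1 hg
  have hcov : (W : Set X) ⊆ O ∪ O' := by
    intro x hx
    obtain ⟨i, hxi⟩ := Opens.mem_iSup.mp (hWU hx)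
    obtain ⟨E, hxE, hle, hne, hconn⟩ := conn_nbhd (W ⊓ V i) ⟨hx, hxi⟩
    have hAdm : Adm V W i E := ⟨hle.trans inf_le_left, hle.trans inf_le_right, hne, hconn⟩
    by_cases hg : genHom F V i hAdm.toConn (rsHom F hAdm.1 s) - base ∈ R
    · exact Or.inl ⟨i, E, hAdm, hxE, hg⟩
    · exact Or.inr ⟨i, E, hAdm, hxE, hg⟩
  obtain ⟨x₀, hx₀C⟩ := h₀.2.2.1
  have hx₀O : x₀ ∈ O := ⟨i₀, C₀, h₀, hx₀C, by rw [← hbase, sub_self]; exact zero_mem R⟩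
  have hO'empty : ¬ ((W : Set X) ∩ O').Nonempty := by
    intro hne'
    obtain ⟨x, _, hxO, hxO'⟩ := hWconn O O' hOopen hO'open hcov ⟨x₀, h₀.1 hx₀C, hx₀O⟩ hne'
    exact hdisj x hxO hxO'
  obtain ⟨x₁, hx₁C⟩ := h₁.2.2.1
  have hx₁W : x₁ ∈ (W : Set X) := h₁.1 hx₁C
  have hx₁O : x₁ ∈ O := by
    rcases hcov hx₁W with h | h
    · exact h
    · exact absurd ⟨x₁, hx₁W, h⟩ hO'empty
  obtain ⟨k, Ck, hk, hx₁Ck, hgk⟩ := hx₁O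
  have k1 := key_overlap F V W s h₁ hk hx₁C hx₁Ck
  have e : genHom F V i₁ h₁.toConn (rsHom F h₁.1 s) - base
      = (genHom F V i₁ h₁.toConn (rsHom F h₁.1 s) - genHom F V k hk.toConn (rsHom F hk.1 s))
        + (genHom F V k hk.toConn (rsHom F hk.1 s) - base) := by abel
  rw [e]
  exact add_mem k1 hgk


theorem rs_id (F : Shv X) {A : Opens ↑X} (s : ↑(F.val.obj (op A))) :
    rsHom F (le_refl A) s = s := by
  show (F.val.map (𝟙 (op A))) s = s
  rw [F.val.map_id]
  rfl

theorem map_map (F : Shv X) {A B C : Opens ↑X} (h1 : A ≤ B) (h2 : B ≤ C)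
    (c : ↑((cosPre F).obj A)) :
    (cosPre F).map (homOfLE h2) ((cosPre F).map (homOfLE h1) c)
      = (cosPre F).map (homOfLE (h1.trans h2)) c := by
  have h := ConcreteCategory.congr_hom ((cosPre F).map_comp (homOfLE h1) (homOfLE h2)) c
  rw [homOfLE_comp] at h
  exact h.symm

theorem adm_exists [LocallyConnectedSpace ↑X] {ι : Type u} (V : ι → Opens ↑X) (W : Opens ↑X)
    (hWU : W ≤ ⨆ i, V i) (hne : (W : Set X).Nonempty) : ∃ i C, Adm V W i C := by
  obtain ⟨x, hx⟩ := hne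
  obtain ⟨i, hxi⟩ := Opens.mem_iSup.mp (hWU hx)
  obtain ⟨E, hxE, hle, hEne, hconn⟩ := conn_nbhd (W ⊓ V i) ⟨hx, hxi⟩
  exact ⟨i, E, hle.trans inf_le_left, hle.trans inf_le_right, hEne, hconn⟩

theorem mk'_eq_of_sub_mem {G : Type u} [AddCommGroup G] (N : AddSubgroup G) {a b : G}
    (h : a - b ∈ N) : QuotientAddGroup.mk' N a = QuotientAddGroup.mk' N b :=
  (QuotientAddGroup.eq_iff_sub_mem).mpr h

section Psi

variable (F : Shv X) [LocallyConnectedSpace ↑X] {ι : Type u} [DecidableEq ι] (V : ι → Opens ↑X)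

def psiHom (W : ConnIn X (⨆ i, V i)) :
    ↑(F.val.obj (op W.obj)) →+
      (DirectSum ι fun i => ((cosPre F).obj (V i) : Type u)) ⧸
        AddMonoidHom.range (coverDiff (cosPre F) V) :=
  let e := adm_exists V W.obj W.2.1 W.2.2.1
  let h := e.choose_spec.choose_spec
  (QuotientAddGroup.mk' _).comp ((genHom F V e.choose h.toConn).comp (rsHom F h.1))

theorem psiHom_eq (W : ConnIn X (⨆ i, V i)) {j : ι} {D : Opens ↑X} (hD : Adm V W.obj j D)
    (s : ↑(F.val.obj (op W.obj))) :
    psiHom F V W s = QuotientAddGroup.mk' _ (genHom F V j hD.toConn (rsHom F hD.1 s)) := by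
  have h := (adm_exists V W.obj W.2.1 W.2.2.1).choose_spec.choose_spec
  exact mk'_eq_of_sub_mem _
    (key F V W.obj W.2.1 W.2.2.2.isPreconnected s hD h)

theorem psiHom_res (W W' : ConnIn X (⨆ i, V i)) (hle : W'.obj ≤ W.obj)
    (s : ↑(F.val.obj (op W.obj))) :
    psiHom F V W' (rsHom F hle s) = psiHom F V W s := by
  obtain ⟨j, D, hD⟩ := adm_exists V W'.obj W'.2.1 W'.2.2.1
  have hDW : Adm V W.obj j D := ⟨hD.1.trans hle, hD.2⟩
  rw [psiHom_eq F V W' hD (rsHom F hle s), psiHom_eq F V W hDW s]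
  exact congrArg _ (congrArg _ (rs_rs F hD.1 hle s))

def psiCocone : Cocone (dgm F (⨆ i, V i)) where
  pt := AddCommGrpCat.of ((DirectSum ι fun i => ((cosPre F).obj (V i) : Type u)) ⧸
    AddMonoidHom.range (coverDiff (cosPre F) V))
  ι :=
  { app := fun Wop => AddCommGrpCat.ofHom (psiHom F V Wop.unop)
    naturality := by
      intro Wop W'op f
      have hle : W'op.unop.obj ≤ Wop.unop.obj :=
        leOfHom ((ObjectProperty.ι _).map f.unop)
      ext s
      show psiHom F V (unop W'op) (rsHom F hle s) = psiHom F V (unop Wop) s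
      exact psiHom_res F V (unop Wop) (unop W'op) hle s }

def psi : colimit (dgm F (⨆ i, V i)) ⟶ AddCommGrpCat.of
    ((DirectSum ι fun i => ((cosPre F).obj (V i) : Type u)) ⧸
      AddMonoidHom.range (coverDiff (cosPre F) V)) :=
  colimit.desc (dgm F (⨆ i, V i)) (psiCocone F V)

theorem psi_gen (i : ι) (C : ConnIn X (V i)) (t : ↑(F.val.obj (op C.obj))) :
    psi F V (coverSum (cosPre F) V (genHom F V i C t))
      = QuotientAddGroup.mk' _ (genHom F V i C t) := by
  have hD : Adm V C.obj i C.obj := ⟨le_rfl, C.2⟩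
  calc psi F V (coverSum (cosPre F) V (genHom F V i C t))
      = psi F V (colimit.ι (dgm F (⨆ i, V i)) (op ((connInMap (le_iSup V i)).obj C)) t) := by
        rw [coverSum_gen]
    _ = psiHom F V ((connInMap (le_iSup V i)).obj C) t :=
        ConcreteCategory.congr_hom (colimit.ι_desc (psiCocone F V)
          (op ((connInMap (le_iSup V i)).obj C))) t
    _ = QuotientAddGroup.mk' _ (genHom F V i hD.toConn (rsHom F hD.1 t)) :=
        psiHom_eq F V ((connInMap (le_iSup V i)).obj C) hD t
    _ = QuotientAddGroup.mk' _ (genHom F V i C t) :=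
        congrArg _ (congrArg (genHom F V i hD.toConn) (rs_id F t))

theorem psi_sum (y : DirectSum ι fun i => ((cosPre F).obj (V i) : Type u)) :
    psi F V (coverSum (cosPre F) V y) = QuotientAddGroup.mk' _ y := by
  let A : (DirectSum ι fun i => ((cosPre F).obj (V i) : Type u)) →+
      ((DirectSum ι fun i => ((cosPre F).obj (V i) : Type u)) ⧸
        AddMonoidHom.range (coverDiff (cosPre F) V)) :=
    ((psi F V).hom : ↑((cosPre F).obj (⨆ i, V i)) →+ _).comp (coverSum (cosPre F) V)
  let B := QuotientAddGroup.mk' (AddMonoidHom.range (coverDiff (cosPre F) V))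
  have main : A = B := by
    refine DirectSum.addHom_ext (fun i ξ => ?_)
    have hker : (⨆ j, AddMonoidHom.range ((colimit.ι (dgm F (V i)) j).hom :
        ↑((dgm F (V i)).obj j) →+ ↑(colimit (dgm F (V i))))) ≤
        AddMonoidHom.ker ((A.comp (DirectSum.of _ i)) - (B.comp (DirectSum.of _ i))) := by
      refine iSup_le fun Cop => ?_
      rintro _ ⟨t, rfl⟩
      refine AddMonoidHom.mem_ker.mpr ((AddMonoidHom.sub_apply _ _ _).trans (sub_eq_zero.mpr ?_))
      exact psi_gen F V i (unop Cop) t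
    have h2 := AddMonoidHom.mem_ker.mp (hker (colim_gen (dgm F (V i)) ξ))
    exact sub_eq_zero.mp ((AddMonoidHom.sub_apply _ _ _).symm.trans h2)
  exact DFunLike.congr_fun main y

theorem sum_diff (z : DirectSum (ι × ι)
    (fun p => ((cosPre F).obj (V p.1 ⊓ V p.2) : Type u))) :
    coverSum (cosPre F) V (coverDiff (cosPre F) V z) = 0 := by
  have main : (coverSum (cosPre F) V).comp (coverDiff (cosPre F) V) = 0 := by
    refine DirectSum.addHom_ext (fun p c => ?_)
    rw [AddMonoidHom.comp_apply, AddMonoidHom.zero_apply, coverDiff, DirectSum.toAddMonoid_of,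
      AddMonoidHom.sub_apply, AddMonoidHom.comp_apply, AddMonoidHom.comp_apply, map_sub,
      coverSum_of, coverSum_of, map_map, map_map, sub_self]
  exact DFunLike.congr_fun main z

end Psi

end Main

end Aux

theorem main_result (X : TopCat.{u}) [LocallyConnectedSpace X] (F : Shv X)
    (ι : Type u) [DecidableEq ι] (V : ι → Opens X) :
    Function.Surjective (coverSum (cosPre F) V) ∧
    AddMonoidHom.range (coverDiff (cosPre F) V) = AddMonoidHom.ker (coverSum (cosPre F) V) := by
  constructor
  · intro x
    have hx := colim_gen (dgm F (⨆ i, V i)) x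
    have hle : (⨆ j, AddMonoidHom.range ((colimit.ι (dgm F (⨆ i, V i)) j).hom :
        ↑((dgm F (⨆ i, V i)).obj j) →+ ↑(colimit (dgm F (⨆ i, V i))))) ≤
        AddMonoidHom.range (coverSum (cosPre F) V) := by
      refine iSup_le fun j => ?_
      rintro _ ⟨t, rfl⟩
      obtain ⟨i, C, hC⟩ := adm_exists V (unop j).obj (unop j).2.1 (unop j).2.2.1
      refine ⟨genHom F V i hC.toConn (rsHom F hC.1 t), ?_⟩
      exact (coverSum_gen F V i hC.toConn _).trans
        (ι_shrink F (unop j) ((connInMap (le_iSup V i)).obj hC.toConn) hC.1 t).symm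
    exact hle hx
  · apply le_antisymm
    · rintro _ ⟨z, rfl⟩
      exact AddMonoidHom.mem_ker.mpr (sum_diff F V z)
    · intro y hy
      replace hy := AddMonoidHom.mem_ker.mp hy
      have h1 := psi_sum F V y
      rw [hy] at h1
      exact (QuotientAddGroup.eq_zero_iff y).mp (h1.symm.trans (map_zero _))

/-- Let `X` be locally connected and `F` a sheaf of abelian groups on `X`.
The associated precosheaf `cos(F)(U) = L(U, F|_U)` (here realized by the explicit formula
`L(U, F|_U) = colim_{W ⊆ U connected nonempty} F(W)` for the cosections functor, with
corestrictions induced by covariant functoriality) is a cosheaf: for every open cover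
`U = ⋃ᵢ Uᵢ` the sequence `⊕_{i,j} cos(F)(Uᵢ ∩ Uⱼ) → ⊕ᵢ cos(F)(Uᵢ) → cos(F)(U) → 0`
is exact. -/
theorem cosPre_isCosheaf (X : TopCat.{u}) [LocallyConnectedSpace X] (F : Shv X) :
    IsCosheaf (cosPre F) := by
  intro ι hdec V
  exact @main_result X ‹_› F ι hdec V
end
end
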